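/- Let K be a fan-like simplicial sphere with vertex set V and v ∈ V, and let λ be a complete non-singular characteristic map of dimension n+1 on wed_v(K) with new vertices v₁, v₂, such that {λ(v₁), λ(v₂)} is a unimodular set. Then λ is uniquely determined (up to the data) by its projections proj_{v₁}λ and proj_{v₂}λ: if two such characteristic maps on wed_v(K) agree on both projections, they are equal. -/

import Mathlib

variable {V : Type*}

/-- An (abstract) simplicial complex on the vertex set `V`: a collection of finite
subsets of `V` closed under taking subsets. -/
def IsComplex (K : Set (Finset V)) : Prop :=
  ∀ σ ∈ K, ∀ τ ⊆ σ, τ ∈ K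

/-- The link of a vertex `v` in `K`. -/
def linkOf [DecidableEq V] (K : Set (Finset V)) (v : V) : Set (Finset V) :=
  {σ | v ∉ σ ∧ insert v σ ∈ K}

/-- The deletion `K \ {v}`: the induced subcomplex on the vertices other than `v`. -/
def delOf (K : Set (Finset V)) (v : V) : Set (Finset V) :=
  {σ | σ ∈ K ∧ v ∉ σ}

/-- The simplicial wedge `wed_v(K) = (I ⋆ link_K{v}) ∪ (∂I ⋆ (K \ {v}))` of `K` at the
vertex `v`.  Its vertex set is `V ⊕ Unit`, where `v₁ = Sum.inl v` and `v₂ = Sum.inr ()`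
are the two vertices of the edge `I`. -/
def wedgeAt [DecidableEq V] (K : Set (Finset V)) (v : V) : Set (Finset (V ⊕ Unit)) :=
  {τ | ∃ (s : Finset (V ⊕ Unit)) (σ : Finset V),
    s ⊆ {Sum.inl v, Sum.inr ()} ∧ τ = s ∪ σ.image Sum.inl ∧
    (σ ∈ linkOf K v ∨ (s ≠ {Sum.inl v, Sum.inr ()} ∧ σ ∈ delOf K v))}

/-- The geometric realization of a simplicial complex on a finite vertex set `V`,
realized inside `V → ℝ` as convex combinations supported on faces. -/
def realization [Fintype V] (K : Set (Finset V)) : Set (V → ℝ) :=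
  {f | (∀ w, 0 ≤ f w) ∧ (∑ w, f w) = 1 ∧ ∃ σ ∈ K, ∀ w, w ∉ σ → f w = 0}

/-- A subset `S` of `ℝⁿ` is star-shaped in `p` if every ray emanating from `p`
intersects `S` once and only once. -/
def StarShapedIn {n : ℕ} (S : Set (EuclideanSpace ℝ (Fin n)))
    (p : EuclideanSpace ℝ (Fin n)) : Prop :=
  ∀ u : EuclideanSpace ℝ (Fin n), u ≠ 0 → ∃! t : ℝ, 0 ≤ t ∧ p + t • u ∈ S

/-- `K` is a fan-like simplicial sphere of dimension `n − 1`: its geometric realization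
embeds into `ℝⁿ` as a star-shaped set (equivalently, there is a complete fan over `K`). -/
def FanLike [Fintype V] (K : Set (Finset V)) (n : ℕ) : Prop :=
  ∃ (S : Set (EuclideanSpace ℝ (Fin n))) (p : EuclideanSpace ℝ (Fin n)),
    Nonempty (realization K ≃ₜ S) ∧ StarShapedIn S p

/-- A subset of a `ℤ`-module is unimodular if it is part of a `ℤ`-basis. -/
def IsUnimodularSet {M : Type*} [AddCommGroup M] [Module ℤ M] (s : Set M) : Prop :=
  ∃ (ι : Type) (b : Module.Basis ι ℤ M), s ⊆ Set.range b

/-- `(K, lam)` is a characteristic map over `ℤ`: the vectors assigned to the vertices of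
each face of `K` are linearly independent over `ℝ`. -/
def IsCharMapInt {W : Type*} {N : ℕ} (K : Set (Finset W)) (lam : W → (Fin N → ℤ)) :
    Prop :=
  ∀ σ ∈ K, LinearIndependent ℝ (fun w : σ => fun j => ((lam w.1 j : ℝ)))

/-- `(K, lam)` is non-singular: for every face of `K` the assigned vectors positively
span a non-singular cone, i.e. they form a unimodular set. -/
def NonSingularInt {W : Type*} {N : ℕ} (K : Set (Finset W)) (lam : W → (Fin N → ℤ)) :
    Prop :=
  ∀ σ ∈ K, IsUnimodularSet (lam '' ↑σ)

/-- Let `K` be a fan-like simplicial sphere, `v` a vertex of `K`, and let `lam`, `lam'`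
be complete non-singular characteristic maps of dimension `n + 1` on `wed_v(K)` (with
new vertices `v₁ = Sum.inl v` and `v₂ = Sum.inr ()`) such that `{lam v₁, lam v₂}` is a
unimodular set.  If `lam` and `lam'` agree at `v₁`, `v₂` and have the same projections
`proj_{v₁}` and `proj_{v₂}` (i.e. they agree in the quotient lattices
`ℤ^{n+1}/⟨lam v₁⟩` and `ℤ^{n+1}/⟨lam v₂⟩` at every vertex), then they are equal. -/
theorem charMap_wedge_determined_by_projections [Fintype V] [DecidableEq V] (n : ℕ)
    (K : Set (Finset V)) (hK : IsComplex K) (v : V) (hv : ({v} : Finset V) ∈ K)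
    (hfan : FanLike K n)
    (lam lam' : (V ⊕ Unit) → (Fin (n + 1) → ℤ))
    (hchar : IsCharMapInt (wedgeAt K v) lam)
    (hchar' : IsCharMapInt (wedgeAt K v) lam')
    (hns : NonSingularInt (wedgeAt K v) lam)
    (hns' : NonSingularInt (wedgeAt K v) lam')
    (huni : IsUnimodularSet {lam (Sum.inl v), lam (Sum.inr ())})
    (h1 : lam' (Sum.inl v) = lam (Sum.inl v))
    (h2 : lam' (Sum.inr ()) = lam (Sum.inr ()))
    (hproj1 : ∀ w : V ⊕ Unit, ({w} : Finset (V ⊕ Unit)) ∈ wedgeAt K v →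
      (Submodule.span ℤ {lam (Sum.inl v)}).mkQ (lam' w) =
        (Submodule.span ℤ {lam (Sum.inl v)}).mkQ (lam w))
    (hproj2 : ∀ w : V ⊕ Unit, ({w} : Finset (V ⊕ Unit)) ∈ wedgeAt K v →
      (Submodule.span ℤ {lam (Sum.inr ())}).mkQ (lam' w) =
        (Submodule.span ℤ {lam (Sum.inr ())}).mkQ (lam w)) :
    ∀ w : V ⊕ Unit, ({w} : Finset (V ⊕ Unit)) ∈ wedgeAt K v → lam' w = lam w := by
  intro w hw
  -- the edge {v₁, v₂} is a face of the wedge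
  set v₁ : V ⊕ Unit := Sum.inl v
  set v₂ : V ⊕ Unit := Sum.inr ()
  have hedge : ({v₁, v₂} : Finset (V ⊕ Unit)) ∈ wedgeAt K v := by
    refine ⟨{v₁, v₂}, ∅, subset_rfl, by simp, Or.inl ?_⟩
    refine ⟨by simp, by simpa using hv⟩
  have hli := hchar _ hedge
  -- linear independence of the pair over ℝ
  have hpair : ∀ a b : ℤ, a • lam v₁ = b • lam v₂ → a = 0 ∧ b = 0 := by
    intro a b hab
    have hmem1 : v₁ ∈ ({v₁, v₂} : Finset (V ⊕ Unit)) := by simp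
    have hmem2 : v₂ ∈ ({v₁, v₂} : Finset (V ⊕ Unit)) := by simp
    set x : Fin (n+1) → ℝ := fun j => ((lam v₁ j : ℝ)) with hx
    set y : Fin (n+1) → ℝ := fun j => ((lam v₂ j : ℝ)) with hy
    have hli2 : LinearIndependent ℝ ![x, y] := by
      have hf : Function.Injective
          (fun i : Fin 2 => if i = 0 then (⟨v₁, hmem1⟩ : ({v₁, v₂} : Finset (V ⊕ Unit))) else ⟨v₂, hmem2⟩) := by
        intro i j hij
        fin_cases i <;> fin_cases j <;> simp_all [v₁, v₂]
      have := hli.comp _ hf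
      convert this using 1
      funext i
      fin_cases i <;> simp [hx, hy]
    have key : (a : ℝ) • x + (-(b : ℝ)) • y = 0 := by
      funext j
      have h := congrFun hab j
      simp only [Pi.smul_apply, smul_eq_mul] at h
      simp only [Pi.add_apply, Pi.smul_apply, smul_eq_mul, Pi.zero_apply, hx, hy]
      have h' : ((a : ℝ)) * (lam v₁ j : ℝ) = ((b : ℝ)) * (lam v₂ j : ℝ) := by
        exact_mod_cast congrArg (fun z : ℤ => (z : ℝ)) h
      linarith
    have h0 := hli2.eq_zero_of_pair key
    constructor
    · exact_mod_cast h0.1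
    · have : (b : ℝ) = 0 := by linarith [h0.2]
      exact_mod_cast this
  have d1 : lam' w - lam w ∈ Submodule.span ℤ {lam v₁} :=
    (Submodule.Quotient.eq _).mp (hproj1 w hw)
  have d2 : lam' w - lam w ∈ Submodule.span ℤ {lam v₂} :=
    (Submodule.Quotient.eq _).mp (hproj2 w hw)
  obtain ⟨a, ha⟩ := Submodule.mem_span_singleton.mp d1
  obtain ⟨b, hb⟩ := Submodule.mem_span_singleton.mp d2
  have : a • lam v₁ = b • lam v₂ := by rw [ha, hb]
  obtain ⟨ha0, -⟩ := hpair a b this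
  have : lam' w - lam w = 0 := by rw [← ha, ha0, zero_smul]
  have := sub_eq_zero.mp this
  exact this
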